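/- arXiv:math/0409556 — 4 statements merged into one kernel-verified Lean document; each statement's English description precedes it below -/
import Mathlib

section
/- For every s₀ > 0 there exists a sequence s_k → s₀ of positive reals such that for each k the group Γ(s_k) = ⟨g_{s_k}, t_1⟩ ⊆ Aff₊(ℝ) satisfies a relation that does not hold identically in s: there is a nontrivial word w_k in two symbols with w_k(g_{s_k}, t_1) = 1, while w_k(g_s, t_1) ≠ 1 for some s > 0. -/
/-- The scaling map `x ↦ s • x` of the real line, as a bijection of `ℝ`
(an element of `Aff₊(ℝ)` when `s > 0`); junk value (the identity) for `s = 0`. -/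
noncomputable def affScale (s : ℝ) : Equiv.Perm ℝ :=
  if h : s ≠ 0 then Equiv.mulLeft₀ s h else 1

/-- The translation `x ↦ x + u` of the real line, as a bijection of `ℝ`
(an element of `Aff₊(ℝ)`). -/
def affTrans (u : ℝ) : Equiv.Perm ℝ :=
  Equiv.addLeft u

/-- The word `a b^q a⁻¹ b^{-p}`. -/
def myWord (p q : ℤ) : FreeGroup (Fin 2) :=
  .of 0 * (.of 1) ^ q * (.of 0)⁻¹ * (.of 1) ^ (-p)

lemma myWord_eval (s : ℝ) (hs : s ≠ 0) (p q : ℤ) :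
    FreeGroup.lift ![affScale s, affTrans 1] (myWord p q) = affTrans (q * s - p) := by
  have hA : FreeGroup.lift ![affScale s, affTrans 1] (.of 0) = affScale s := by
    simp [FreeGroup.lift_apply_of]
  have hB : FreeGroup.lift ![affScale s, affTrans 1] (.of 1) = affTrans 1 := by
    simp [FreeGroup.lift_apply_of]
  rw [myWord, map_mul, map_mul, map_mul, map_zpow, map_zpow, map_inv, hA, hB]
  ext x
  simp only [affTrans, Equiv.zsmul_addLeft, smul_eq_mul, mul_one, Equiv.Perm.mul_apply,
    Equiv.coe_addLeft, affScale, dif_pos hs, Equiv.mulLeft₀_apply, Equiv.Perm.inv_def,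
    Equiv.mulLeft₀_symm_apply]
  field_simp
  ring

lemma myWord_eval_one_iff (s : ℝ) (hs : s ≠ 0) (p q : ℤ) :
    FreeGroup.lift ![affScale s, affTrans 1] (myWord p q) = 1 ↔ (q : ℝ) * s - p = 0 := by
  rw [myWord_eval s hs p q]
  constructor
  · intro h
    have := congrArg (fun e : Equiv.Perm ℝ => e 0) h
    simpa [affTrans] using this
  · intro h
    rw [h]
    exact Equiv.Perm.ext fun x => by simp [affTrans]

/-- For every `s₀ > 0` there exists a sequence `s_k → s₀` of positive
reals such that each group `Γ(s_k) = ⟨g_{s_k}, t_1⟩ ⊆ Aff₊(ℝ)` satisfies a relation that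
does not hold identically in `s`: there are nontrivial words `w_k` in two symbols with
`w_k(g_{s_k}, t_1) = 1`, while `w_k(g_s, t_1) ≠ 1` for some `s > 0`. -/
theorem statement7 (s₀ : ℝ) (hs₀ : 0 < s₀) :
    ∃ (sk : ℕ → ℝ) (w : ℕ → FreeGroup (Fin 2)),
      (∀ k, 0 < sk k) ∧
      Filter.Tendsto sk Filter.atTop (nhds s₀) ∧
      ∀ k, w k ≠ 1 ∧
        FreeGroup.lift ![affScale (sk k), affTrans 1] (w k) = 1 ∧
        ∃ s : ℝ, 0 < s ∧ FreeGroup.lift ![affScale s, affTrans 1] (w k) ≠ 1 := by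
  -- numerator and denominator
  set p : ℕ → ℤ := fun k => ⌊s₀ * (k + 1)⌋ + 1 with hp
  have hppos : ∀ k, 0 < p k := fun k => by
    have h0 : (0 : ℤ) ≤ ⌊s₀ * ((k : ℝ) + 1)⌋ := Int.floor_nonneg.mpr (by positivity)
    simp only [hp]
    omega
  set sk : ℕ → ℝ := fun k => (p k : ℝ) / (k + 1) with hsk
  have hskpos : ∀ k, 0 < sk k := fun k => by
    have := hppos k
    have : (0 : ℝ) < (p k : ℝ) := by exact_mod_cast this
    positivity
  refine ⟨sk, fun k => myWord (p k) (k + 1), hskpos, ?_, ?_⟩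
  · -- convergence: |sk k - s₀| ≤ 1/(k+1)
    have h1 : Filter.Tendsto (fun k : ℕ => (1 : ℝ) / (k + 1)) Filter.atTop (nhds 0) :=
      tendsto_one_div_add_atTop_nhds_zero_nat
    rw [Metric.tendsto_atTop]
    intro ε hε
    obtain ⟨N, hN⟩ := (Metric.tendsto_atTop.mp h1) ε hε
    refine ⟨N, fun n hn => ?_⟩
    have h2 := hN n hn
    rw [Real.dist_eq] at h2 ⊢
    rw [sub_zero, abs_of_pos (by positivity : (0:ℝ) < 1 / ((n:ℝ) + 1))] at h2
    have hd : (0 : ℝ) < (n : ℝ) + 1 := by positivity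
    have hfloor₁ : s₀ * (n + 1) < (p n : ℝ) := by
      have := Int.lt_floor_add_one (s₀ * (n + 1))
      simp only [hp]
      push_cast
      linarith
    have hfloor₂ : (p n : ℝ) ≤ s₀ * (n + 1) + 1 := by
      have := Int.floor_le (s₀ * (n + 1))
      simp only [hp]
      push_cast
      linarith
    have hsn : sk n * ((n : ℝ) + 1) = (p n : ℝ) := by
      rw [hsk]; field_simp
    have hinv : (1 / ((n : ℝ) + 1)) * ((n : ℝ) + 1) = 1 := by field_simp
    have hb : |sk n - s₀| ≤ 1 / ((n:ℝ) + 1) := by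
      rw [abs_le]
      constructor <;> nlinarith [hsn, hinv, hd, hfloor₁, hfloor₂]
    exact lt_of_le_of_lt hb h2
  · intro k
    have hd : (0 : ℝ) < (k : ℝ) + 1 := by positivity
    have hrel : ((k : ℝ) + 1) * sk k - (p k : ℝ) = 0 := by
      rw [hsk]
      field_simp
      ring
    have h1 : FreeGroup.lift ![affScale (sk k), affTrans 1] (myWord (p k) (k + 1)) = 1 := by
      rw [myWord_eval_one_iff _ (ne_of_gt (hskpos k))]
      push_cast
      exact hrel
    have hs' : (0 : ℝ) < sk k + 1 := by linarith [hskpos k]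
    have h2 : FreeGroup.lift ![affScale (sk k + 1), affTrans 1] (myWord (p k) (k + 1)) ≠ 1 := by
      rw [Ne, myWord_eval_one_iff _ (ne_of_gt hs')]
      push_cast
      intro h
      nlinarith [hskpos k]
    refine ⟨fun hw => h2 (by rw [show myWord (p k) (k + 1) = 1 from hw]; simp), h1, sk k + 1, hs', h2⟩
end

section
/- Let G be a semisimple Lie group, n = dim G, and let A = (A_1, …, A_M) ∈ G^M be an irrational M-tuple. Then for g, h ∈ G one has gAg^{-1} = hAh^{-1} (componentwise simultaneous conjugation) if and only if g^{-1}h lies in the center of G; consequently the joint conjugacy class Conj(A) is bijectively and analytically parametrized by the quotient of G by its center. The space of conjugacy classes of all irrational M-tuples is an analytic manifold of dimension (M−1)n, and the map (a_1, …, a_M) ↦ Conj(a_1, …, a_M) is a local submersion at every irrational M-tuple. -/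
/-- core part. Let `G` be a semisimple Lie group (encoded as a Hausdorff
topological group in which every connected normal solvable subgroup is trivial), and let
`A = (A_1, …, A_M)` be an irrational `M`-tuple, i.e. one generating a dense subgroup.
Then for `g, h ∈ G` one has `g·A·g⁻¹ = h·A·h⁻¹` (simultaneous conjugation) iff `g⁻¹h`
lies in the center of `G`; consequently the joint conjugacy class `Conj(A)` is bijectively
parametrized by the quotient of `G` by its center, via `gZ(G) ↦ g·A·g⁻¹`.
(The remaining clauses of the statement — analyticity of the parametrization, the space of
conjugacy classes of irrational `M`-tuples being an analytic manifold of dimension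
`(M−1)·dim G`, and the conjugacy-class map being a local submersion — concern analytic
manifold structures on the space of conjugacy classes and are not formalized here.) -/
theorem statement8 {G : Type*} [Group G] [TopologicalSpace G] [IsTopologicalGroup G]
    [T2Space G]
    -- semisimplicity: no nontrivial connected normal solvable subgroup
    (hss : ∀ K : Subgroup G, K.Normal → IsConnected (K : Set G) → IsSolvable ↥K → K = ⊥)
    (M : ℕ) (A : Fin M → G)
    (hirr : Dense ((Subgroup.closure (Set.range A) : Subgroup G) : Set G)) :
    (∀ g h : G,
      (∀ i, g * A i * g⁻¹ = h * A i * h⁻¹) ↔ g⁻¹ * h ∈ Subgroup.center G) ∧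
    ∃ e : (G ⧸ Subgroup.center G) ≃
        {x : Fin M → G // ∃ g : G, x = fun i => g * A i * g⁻¹},
      ∀ g : G, (e (QuotientGroup.mk g) : Fin M → G) = fun i => g * A i * g⁻¹ := by
  have key : ∀ g h : G,
      (∀ i, g * A i * g⁻¹ = h * A i * h⁻¹) ↔ g⁻¹ * h ∈ Subgroup.center G := by
    intro g h
    constructor
    · intro hc
      have hA : ∀ i, A i * (g⁻¹ * h) = (g⁻¹ * h) * A i := by
        intro i
        have h1 := congrArg (fun x => g⁻¹ * x * h) (hc i)
        simpa [mul_assoc] using h1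
      have hle : Subgroup.closure (Set.range A) ≤ Subgroup.centralizer {g⁻¹ * h} := by
        rw [Subgroup.closure_le]
        rintro x ⟨i, rfl⟩
        intro c hc'
        rw [Set.mem_singleton_iff] at hc'
        subst hc'
        exact (hA i).symm
      have hcl : IsClosed {x : G | (g⁻¹ * h) * x = x * (g⁻¹ * h)} :=
        isClosed_eq (continuous_const.mul continuous_id) (continuous_id.mul continuous_const)
      have h2 : ∀ x : G, (g⁻¹ * h) * x = x * (g⁻¹ * h) := by
        intro x
        have hx : x ∈ closure ((Subgroup.closure (Set.range A) : Subgroup G) : Set G) := by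
          rw [hirr.closure_eq]; trivial
        have hsub : ((Subgroup.closure (Set.range A) : Subgroup G) : Set G) ⊆
            {x : G | (g⁻¹ * h) * x = x * (g⁻¹ * h)} := by
          intro y hy
          exact Subgroup.mem_centralizer_iff.mp (hle hy) _ rfl
        exact (hcl.closure_subset_iff.mpr hsub) hx
      exact Subgroup.mem_center_iff.mpr fun x => (h2 x).symm
    · intro hz i
      have hc := Subgroup.mem_center_iff.mp hz (A i)
      have h1 : (g⁻¹ * h) * A i * (g⁻¹ * h)⁻¹ = A i := by
        rw [← hc]; simp [mul_assoc]
      conv_rhs => rw [show h * A i * h⁻¹ = g * ((g⁻¹ * h) * A i * (g⁻¹ * h)⁻¹) * g⁻¹ by group]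
      rw [h1]
  refine ⟨key, ?_⟩
  let f : G → {x : Fin M → G // ∃ g : G, x = fun i => g * A i * g⁻¹} :=
    fun g => ⟨fun i => g * A i * g⁻¹, g, rfl⟩
  let F : G ⧸ Subgroup.center G → {x : Fin M → G // ∃ g : G, x = fun i => g * A i * g⁻¹} :=
    Quotient.lift f (by
      intro a b hab
      exact Subtype.ext (funext fun i =>
        (key a b).mpr (QuotientGroup.leftRel_apply.mp hab) i))
  have hinj : Function.Injective F := by
    intro x y
    induction x using Quotient.inductionOn with
    | h a =>
      induction y using Quotient.inductionOn with
      | h b =>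
        intro hfab
        have : ∀ i, a * A i * a⁻¹ = b * A i * b⁻¹ := fun i =>
          congrFun (congrArg Subtype.val hfab) i
        exact Quotient.sound (QuotientGroup.leftRel_apply.mpr ((key a b).mp this))
  have hsurj : Function.Surjective F := by
    rintro ⟨x, g, rfl⟩
    exact ⟨QuotientGroup.mk g, rfl⟩
  exact ⟨Equiv.ofBijective F ⟨hinj, hsurj⟩, fun g => rfl⟩
end

section
/- Let M, s ∈ ℕ and let γ_1, …, γ_s be nontrivial elements of the free group on M generators. Let η_1, η_2 be two noncommuting elements of this free group, and set η_0 = 1. Then there exists a collection of indices i(1), …, i(s) ∈ {0, 1, 2} such that, setting γ'_j = η_{i(j)}^{-1} γ_j for each j, the iterated commutator []_j = [ … [[γ'_1, γ'_2], γ'_3], …, γ'_j] is nontrivial for every j = 1, …, s. -/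
/-- The iterated commutator `[ … [[a, b₁], b₂], …, bₖ]` of a starting element `a`
with a list of further elements, where `[x,y] = x * y * x⁻¹ * y⁻¹`. -/
def iteratedCommutator {G : Type*} [Group G] : G → List G → G
  | a, [] => a
  | a, b :: l => iteratedCommutator (a * b * a⁻¹ * b⁻¹) l

/-- The iterated commutator of a list: `1` for the empty list, and
`[ … [[a₁, a₂], a₃], …, aₖ]` for a nonempty list `[a₁, …, aₖ]`. -/
def iteratedCommutatorList {G : Type*} [Group G] : List G → G
  | [] => 1
  | a :: l => iteratedCommutator a l

section Aux

open FreeGroup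

variable {α : Type*} [DecidableEq α]

/-- consecutive letters do not cancel -/
abbrev NC (p q : α × Bool) : Prop := ¬(p.1 = q.1 ∧ p.2 = !q.2)

lemma chain'_reduce : ∀ L : List (α × Bool), (reduce L).Chain' NC
  | [] => List.isChain_nil
  | x :: L => by
    have ih := chain'_reduce L
    rw [reduce.cons]
    cases h : reduce L with
    | nil => exact List.isChain_singleton _
    | cons hd tl =>
      rw [h] at ih
      simp only []
      split_ifs with hc
      · exact ih.tail
      · exact List.IsChain.cons_cons hc ih

lemma reduce_eq_self_of_chain' : ∀ L : List (α × Bool), L.Chain' NC → reduce L = L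
  | [], _ => rfl
  | x :: L, h => by
    rw [reduce.cons, reduce_eq_self_of_chain' L h.tail]
    cases L with
    | nil => rfl
    | cons hd tl =>
      have hnc : NC x hd := List.isChain_cons_cons.mp h |>.1
      simp only [hnc, if_false]

lemma toWord_chain' (z : FreeGroup α) : z.toWord.Chain' NC := by
  rw [← reduce_toWord]; exact chain'_reduce _

lemma toWord_mk_of_chain' {L : List (α × Bool)} (h : L.Chain' NC) : (mk L).toWord = L := by
  rw [toWord_mk, reduce_eq_self_of_chain' L h]

lemma single_letter (a : α) (b : Bool) : mk [(a, b)] = cond b (of a) (of a)⁻¹ := by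
  cases b
  · show mk [(a, false)] = (of a)⁻¹
    rw [show of a = mk [(a, true)] from rfl, inv_mk]
    rfl
  · rfl

lemma eq_zpow_of_commute_aux (a : α) :
    ∀ (N : ℕ) (z : FreeGroup α), z.toWord.length ≤ N → Commute z (of a) →
      ∃ n : ℤ, z = of a ^ n := by
  intro N
  induction N with
  | zero =>
    intro z hz _
    refine ⟨0, ?_⟩
    have : z.toWord = [] := List.length_eq_zero_iff.mp (Nat.le_zero.mp hz)
    simpa using toWord_eq_nil_iff.mp this
  | succ N ih =>
    intro z hz hcomm
    cases hL : z.toWord with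
    | nil =>
      refine ⟨0, ?_⟩; simpa using toWord_eq_nil_iff.mp hL
    | cons p T =>
      have chain : (p :: T).Chain' NC := hL ▸ toWord_chain' z
      have hzmk : z = mk (p :: T) := by
        conv_lhs => rw [← mk_toWord (x := z), hL]
      have hlenL : (p :: T).length ≤ N + 1 := hL ▸ hz
      by_cases hp : p.1 = a
      · -- peel the first letter
        set w := mk T with hw
        have hwword : w.toWord = T := toWord_mk_of_chain' chain.tail
        have hlen : w.toWord.length ≤ N := by
          rw [hwword]; simpa using hlenL
        have hsplit : z = (cond p.2 (of a) (of a)⁻¹) * w := by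
          rw [hzmk, hw, ← single_letter, mul_mk]
          congr 1
          rw [show (a, p.2) = p from by rw [← hp]]
          rfl
        have hcond : Commute (cond p.2 (of a) (of a)⁻¹) (of a) := by
          cases p.2
          · exact (Commute.refl (of a)).inv_left
          · exact Commute.refl (of a)
        have hwz : w = (cond p.2 (of a) (of a)⁻¹)⁻¹ * z := by rw [hsplit]; group
        have hwc : Commute w (of a) := by
          rw [hwz]; exact Commute.mul_left hcond.inv_left hcomm
        obtain ⟨n, hn⟩ := ih w hlen hwc
        refine ⟨n + (cond p.2 1 (-1)), ?_⟩
        rw [hsplit, hn]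
        cases p.2 <;> simp [zpow_add] <;> group
      · have hTne : (p :: T) ≠ [] := List.cons_ne_nil _ _
        set q := (p :: T).getLast hTne with hqdef
        by_cases hq : q.1 = a
        · -- peel the last letter
          set D := (p :: T).dropLast with hD
          have hdecomp : p :: T = D ++ [q] := (List.dropLast_append_getLast hTne).symm
          have hDchain : D.Chain' NC := chain.prefix (List.dropLast_prefix _)
          set w := mk D with hw
          have hwword : w.toWord = D := toWord_mk_of_chain' hDchain
          have hlen : w.toWord.length ≤ N := by
            rw [hwword, hD, List.length_dropLast]
            have := hlenL
            simp only [List.length_cons] at this ⊢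
            omega
          have hsplit : z = w * (cond q.2 (of a) (of a)⁻¹) := by
            rw [hzmk, hdecomp, hw, ← single_letter, ← mul_mk]
            congr 2
            rw [← hq]
          have hcond : Commute (cond q.2 (of a) (of a)⁻¹) (of a) := by
            cases q.2
            · exact (Commute.refl (of a)).inv_left
            · exact Commute.refl (of a)
          have hwz : w = z * (cond q.2 (of a) (of a)⁻¹)⁻¹ := by rw [hsplit]; group
          have hwc : Commute w (of a) := by
            rw [hwz]; exact Commute.mul_left hcomm hcond.inv_left
          obtain ⟨n, hn⟩ := ih w hlen hwc
          refine ⟨(cond q.2 1 (-1)) + n, ?_⟩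
          rw [hsplit, hn]
          cases q.2 <;> simp [zpow_add] <;> group
        · -- both ends avoid `a` : contradiction with commuting
          exfalso
          have h1 : (of a * z).toWord = (a, true) :: p :: T := by
            rw [hzmk, show of a = mk [(a, true)] from rfl, mul_mk]
            apply toWord_mk_of_chain'
            refine List.IsChain.cons_cons ?_ chain
            intro hcon
            exact hp (hcon.1.symm)
          have h2 : (z * of a).toWord = (p :: T) ++ [(a, true)] := by
            rw [hzmk, show of a = mk [(a, true)] from rfl, mul_mk]
            apply toWord_mk_of_chain'
            refine List.isChain_append.mpr ?_
            refine ⟨chain, List.isChain_singleton _, ?_⟩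
            intro x hx y hy
            rw [List.getLast?_eq_getLast_of_ne_nil hTne] at hx
            simp only [Option.mem_def, Option.some.injEq] at hx
            simp only [List.head?_cons, Option.mem_def, Option.some.injEq] at hy
            subst hx; subst hy
            intro hcon
            exact hq hcon.1
          rw [hcomm.eq] at h2
          rw [h1] at h2
          simp only [List.cons_append, List.cons.injEq] at h2
          exact hp (congrArg Prod.fst h2.1.symm)

lemma eq_zpow_of_commute {a : α} {z : FreeGroup α} (h : Commute z (of a)) :
    ∃ n : ℤ, z = of a ^ n :=
  eq_zpow_of_commute_aux a z.toWord.length z le_rfl h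

lemma toWord_head_eq {a : α} {n : ℤ} {z : FreeGroup α} (hz : z ≠ 1) (h : z = of a ^ n) :
    ∃ w, z.toWord.head? = some (a, w) := by
  rcases lt_trichotomy n 0 with hn | hn | hn
  · have h1 : z⁻¹ = of a ^ (-n).toNat := by
      rw [h, ← zpow_natCast]
      rw [Int.toNat_of_nonneg (by omega)]
      group
    have ht : z⁻¹.toWord = List.replicate (-n).toNat (a, true) := by
      rw [h1, toWord_of_pow]
    have hzw : z.toWord = invRev (z⁻¹.toWord) := by rw [← toWord_inv, inv_inv]
    obtain ⟨m, hm⟩ : ∃ m, (-n).toNat = m + 1 := ⟨(-n).toNat - 1, by omega⟩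
    rw [hzw, ht, hm]
    have hinv : invRev (List.replicate (m+1) (a, true)) = List.replicate (m+1) (a, false) := by
      simp [invRev, List.map_replicate, List.reverse_replicate]
    rw [hinv, List.replicate_succ]
    exact ⟨false, rfl⟩
  · exact absurd (by rw [h, hn, zpow_zero]) hz
  · have h1 : z = of a ^ n.toNat := by
      rw [h, ← zpow_natCast, Int.toNat_of_nonneg (by omega)]
    have ht : z.toWord = List.replicate n.toNat (a, true) := by rw [h1, toWord_of_pow]
    obtain ⟨m, hm⟩ : ∃ m, n.toNat = m + 1 := ⟨n.toNat - 1, by omega⟩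
    rw [ht, hm]
    exact ⟨true, by simp [List.replicate_succ]⟩

lemma eq_one_of_commute_two {a b : α} (hab : a ≠ b) {z : FreeGroup α}
    (ha : Commute z (of a)) (hb : Commute z (of b)) : z = 1 := by
  by_contra hz
  obtain ⟨n, hn⟩ := eq_zpow_of_commute ha
  obtain ⟨m, hm⟩ := eq_zpow_of_commute hb
  obtain ⟨wa, hwa⟩ := toWord_head_eq hz hn
  obtain ⟨wb, hwb⟩ := toWord_head_eq hz hm
  rw [hwa] at hwb
  simp only [Option.some.injEq, Prod.mk.injEq] at hwb
  exact hab hwb.1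

omit [DecidableEq α] in
lemma commute_of_all_eq (hsub : ∀ i j : α, i = j) (x y : FreeGroup α) : Commute x y := by
  have base : ∀ (i : α) (y : FreeGroup α), Commute (of i) y := by
    intro i y
    induction y using FreeGroup.induction_on with
    | C1 => exact Commute.one_right _
    | of j => rw [hsub i j]
    | inv_of j h => exact h.inv_right
    | mul y z hy hz => exact hy.mul_right hz
  induction x using FreeGroup.induction_on with
  | C1 => exact Commute.one_left _
  | of i => exact base i y
  | inv_of i h => exact (base i y).inv_left
  | mul x y hx hy => exact hx.mul_left hy

omit [DecidableEq α] in
lemma commute_trans {c u v : FreeGroup α} (hc : c ≠ 1)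
    (hu : Commute c u) (hv : Commute c v) : Commute u v := by
  classical
  set H := Subgroup.centralizer ({c} : Set (FreeGroup α)) with hH
  have hmem : ∀ {x : FreeGroup α}, Commute c x → x ∈ H := by
    intro x hx
    rw [hH, Subgroup.mem_centralizer_iff]
    rintro y ⟨rfl⟩
    exact hx.eq
  have hcH : c ∈ H := hmem (Commute.refl c)
  set e := IsFreeGroup.toFreeGroup (G := H) with he
  set ζ := e ⟨c, hcH⟩ with hζ
  have hζ1 : ζ ≠ 1 := by
    intro h
    apply hc
    have : (⟨c, hcH⟩ : H) = 1 := e.injective (h.trans (_root_.map_one e).symm)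
    exact Subtype.ext_iff.mp this
  have hζcomm : ∀ w : FreeGroup (IsFreeGroup.Generators H), Commute ζ w := by
    intro w
    obtain ⟨h, rfl⟩ := e.surjective w
    have hch : Commute (⟨c, hcH⟩ : H) h := by
      have := h.2
      rw [Subgroup.mem_centralizer_iff] at this
      have := this c rfl
      exact Subtype.ext this
    exact hch.map e.toMonoidHom
  have hsub : ∀ i j : IsFreeGroup.Generators H, i = j := by
    intro i j
    by_contra hij
    exact hζ1 (eq_one_of_commute_two hij (hζcomm (of i)) (hζcomm (of j)))
  have hcomm : Commute (⟨u, hmem hu⟩ : H) ⟨v, hmem hv⟩ := by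
    have h1 := commute_of_all_eq hsub (e ⟨u, hmem hu⟩) (e ⟨v, hmem hv⟩)
    have h2 := h1.map e.symm.toMonoidHom
    simpa using h2
  have := Subtype.ext_iff.mp hcomm.eq
  exact this


end Aux

section Aux2
open FreeGroup

lemma iteratedCommutator_concat {G : Type*} [Group G] (a : G) (l : List G) (x : G) :
    iteratedCommutator a (l ++ [x]) =
      iteratedCommutator a l * x * (iteratedCommutator a l)⁻¹ * x⁻¹ := by
  induction l generalizing a with
  | nil => rfl
  | cons b l ih => simp only [List.cons_append, iteratedCommutator]; exact ih _

lemma iteratedCommutatorList_concat {G : Type*} [Group G] (l : List G) (hl : l ≠ []) (x : G) :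
    iteratedCommutatorList (l ++ [x]) =
      iteratedCommutatorList l * x * (iteratedCommutatorList l)⁻¹ * x⁻¹ := by
  cases l with
  | nil => exact absurd rfl hl
  | cons a l => exact iteratedCommutator_concat a l x

lemma take_succ_ofFn {β : Type*} {s : ℕ} (g : Fin s → β) {m : ℕ} (hm : m < s) :
    (List.ofFn g).take (m + 1) = (List.ofFn g).take m ++ [g ⟨m, hm⟩] := by
  rw [List.take_succ]
  congr 1
  simp [List.getElem?_ofFn, hm]

lemma step_lemma {M : ℕ} {η₁ η₂ : FreeGroup (Fin M)} (hη : η₁ * η₂ ≠ η₂ * η₁)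
    {c : FreeGroup (Fin M)} (hc : c ≠ 1) (γ' : FreeGroup (Fin M)) :
    ∃ t : Fin 3,
      c * ((![1, η₁, η₂] t)⁻¹ * γ') * c⁻¹ * ((![1, η₁, η₂] t)⁻¹ * γ')⁻¹ ≠ 1 := by
  by_contra hall
  push_neg at hall
  have hcom : ∀ t : Fin 3, Commute c ((![1, η₁, η₂] t)⁻¹ * γ') := by
    intro t
    have h := hall t
    rw [mul_inv_eq_one, mul_inv_eq_iff_eq_mul] at h
    exact h
  have hγ : Commute c γ' := by
    have := hcom 0
    simpa using this
  have hη1 : Commute c η₁ := by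
    have h1 := hcom 1
    simp only [Matrix.cons_val_one, Matrix.head_cons] at h1
    have h2 := h1.mul_right hγ.inv_right
    rw [mul_inv_cancel_right] at h2
    simpa using h2.inv_right
  have hη2 : Commute c η₂ := by
    have h1 := hcom 2
    simp only [Matrix.cons_val_two, Matrix.tail_cons, Matrix.head_cons] at h1
    have h2 := h1.mul_right hγ.inv_right
    rw [mul_inv_cancel_right] at h2
    simpa using h2.inv_right
  exact hη (commute_trans hc hη1 hη2).eq


end Aux2

/-- Let `γ_1, …, γ_s` be nontrivial elements of the free group on `M`
generators, and let `η₁, η₂` be two noncommuting elements of this free group, `η₀ = 1`.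
Then there are indices `i(1), …, i(s) ∈ {0,1,2}` such that, setting
`γ'_j = η_{i(j)}⁻¹ * γ_j`, every iterated commutator
`[ … [[γ'_1, γ'_2], γ'_3], …, γ'_j]` (for `j = 1, …, s`) is nontrivial. -/
theorem statement18 (M s : ℕ) (γ : Fin s → FreeGroup (Fin M)) (hγ : ∀ j, γ j ≠ 1)
    (η₁ η₂ : FreeGroup (Fin M)) (hη : η₁ * η₂ ≠ η₂ * η₁) :
    ∃ i : Fin s → Fin 3,
      ∀ j : Fin s,
        iteratedCommutatorList
          ((List.ofFn (fun k : Fin s => (![1, η₁, η₂] (i k))⁻¹ * γ k)).take (j.1 + 1)) ≠ 1 := by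
  classical
  have key : ∀ n : ℕ, n ≤ s → ∃ i : Fin s → Fin 3,
      ∀ j : Fin s, j.1 < n →
        iteratedCommutatorList
          ((List.ofFn (fun k : Fin s => (![1, η₁, η₂] (i k))⁻¹ * γ k)).take (j.1 + 1)) ≠ 1 := by
    intro n
    induction n with
    | zero => exact fun _ => ⟨fun _ => 0, fun j hj => absurd hj (Nat.not_lt_zero _)⟩
    | succ n ih =>
      intro hns
      have hn : n < s := hns
      obtain ⟨i, hi⟩ := ih (Nat.le_of_lt hn)
      have hagree : ∀ (t : Fin 3) (m : ℕ), m ≤ n →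
          (List.ofFn (fun k : Fin s => (![1, η₁, η₂] ((Function.update i ⟨n, hn⟩ t) k))⁻¹ * γ k)).take m
            = (List.ofFn (fun k : Fin s => (![1, η₁, η₂] (i k))⁻¹ * γ k)).take m := by
        intro t m hm
        apply List.ext_getElem
        · simp
        · intro k h1 h2
          simp only [List.getElem_take, List.getElem_ofFn]
          have hk : k < m := by
            simp only [List.length_take, List.length_ofFn] at h1
            omega
          rw [Function.update_of_ne]
          exact Fin.ne_of_val_ne (by simp; omega)
      by_cases hn0 : n = 0
      · subst hn0
        refine ⟨Function.update i ⟨0, hn⟩ 0, ?_⟩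
        intro j hj
        have hj0 : j.1 = 0 := by omega
        rw [hj0]
        rw [take_succ_ofFn _ hn]
        rw [hagree 0 0 le_rfl]
        simp only [List.take_zero, List.nil_append]
        show iteratedCommutator ((![1, η₁, η₂] (Function.update i ⟨0, hn⟩ 0 ⟨0, hn⟩))⁻¹ * γ ⟨0, hn⟩) [] ≠ 1
        rw [Function.update_self]
        simpa [iteratedCommutator] using hγ ⟨0, hn⟩
      · have hn1 : 1 ≤ n := Nat.one_le_iff_ne_zero.mpr hn0
        have hcne : iteratedCommutatorList
            ((List.ofFn (fun k : Fin s => (![1, η₁, η₂] (i k))⁻¹ * γ k)).take n) ≠ 1 := by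
          have h' := hi ⟨n - 1, by omega⟩ (by simp only [Fin.val_mk]; omega)
          simp only [Fin.val_mk, Nat.sub_add_cancel hn1] at h'
          exact h'
        obtain ⟨t, ht⟩ := step_lemma hη hcne (γ ⟨n, hn⟩)
        refine ⟨Function.update i ⟨n, hn⟩ t, ?_⟩
        intro j hj
        rcases Nat.lt_or_ge j.1 n with hjn | hjn
        · rw [hagree t (j.1 + 1) (by omega)]
          exact hi j hjn
        · have hjn' : j.1 = n := by omega
          rw [hjn']
          rw [take_succ_ofFn _ hn, hagree t n le_rfl]
          rw [iteratedCommutatorList_concat _ (by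
            intro hnil
            have := congrArg List.length hnil
            simp only [List.length_take, List.length_ofFn, List.length_nil] at this
            omega) _]
          rw [Function.update_self]
          exact ht
  obtain ⟨i, hi⟩ := key s le_rfl
  exact ⟨i, fun j => hi j j.2⟩
end

section
/- Let G be a nonsolvable Lie group, H ⊆ G its maximal connected normal solvable Lie subgroup, and let s be the length of the derived series of H, i.e., H^{(0)} = H, H^{(i+1)} = [H^{(i)}, H^{(i)}], H^{(s)} = 1 and H^{(s−1)} ≠ 1. For any nontrivial word w(a,b) in two symbols and any elements Ã, B̃ ∈ G with w(Ã,B̃) ∈ H, there exists a nontrivial word w̃(a,b) with |w̃| ≤ 4^{s+1}|w| such that w̃(Ã,B̃) = 1. -/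
/-- Evaluation of a word in two symbols (an element of the free group on two generators)
at a pair of elements of a group `G`. -/
noncomputable def wordEval {G : Type*} [Group G] (A B : G) (w : FreeGroup (Fin 2)) : G :=
  FreeGroup.lift ![A, B] w

/-- The length of a word in two symbols: the length of its reduced expression in the
generators and their inverses. -/
def wordLength (w : FreeGroup (Fin 2)) : ℕ :=
  w.toWord.length

set_option linter.unusedSectionVars false
set_option linter.unusedVariables false
set_option linter.unnecessarySimpa false
open scoped commutatorElement

namespace Statement19Aux
open FreeGroup

section Words

variable {α : Type} [DecidableEq α]

/-- The no-cancellation relation on letters. -/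
def NC (p q : α × Bool) : Prop := ¬ (p.1 = q.1 ∧ p.2 = !q.2)

/-- A word is reduced iff adjacent letters do not cancel. -/
def IsRed (L : List (α × Bool)) : Prop := List.Chain' NC L

theorem reduce_eq_self_of_isRed {L : List (α × Bool)} (h : IsRed L) : reduce L = L := by
  induction L with
  | nil => rfl
  | cons x L ih =>
    have hL : reduce L = L := ih h.tail
    rw [reduce.cons, hL]
    cases L with
    | nil => rfl
    | cons y tl =>
      have : NC x y := List.isChain_cons_cons.mp h |>.1
      simp only [NC] at this
      simp [this]

theorem isRed_of_reduce_eq_self : ∀ {L : List (α × Bool)}, reduce L = L → IsRed L := by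
  intro L
  induction L with
  | nil => intro _; exact List.isChain_nil
  | cons x L ih =>
    intro h
    rw [reduce.cons] at h
    rcases hL : reduce L with _ | ⟨y, tl⟩
    · rw [hL] at h
      simp at h
      rcases h with rfl
      exact List.isChain_singleton x
    · rw [hL] at h
      by_cases hc : x.1 = y.1 ∧ x.2 = !y.2
      · simp only [hc, and_self, if_true] at h
        -- h : tl = x :: L, but lengths: tl.length < L.length + 1
        have hlen : (reduce L).length ≤ L.length := Red.length_le reduce.red
        rw [hL] at hlen
        have : tl.length < (x :: L).length := by
          simp at hlen ⊢; omega
        rw [h] at this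
        simp at this
      · simp only [hc, if_false] at h
        have hLe : L = y :: tl := by
          injection h with _ h2
          exact h2.symm
        have hred : reduce L = L := by rw [hL, hLe]
        have hch : IsRed L := ih hred
        rw [hLe]
        refine List.isChain_cons_cons.mpr ⟨hc, ?_⟩
        rwa [hLe] at hch

theorem isRed_toWord (x : FreeGroup α) : IsRed x.toWord :=
  isRed_of_reduce_eq_self (reduce_toWord x)

theorem toWord_eq_of_isRed {L : List (α × Bool)} (h : IsRed L) : (mk L).toWord = L := by
  rw [toWord_mk, reduce_eq_self_of_isRed h]


def CycRed (e : FreeGroup α) : Prop :=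
  ∀ p ∈ e.toWord.getLast?, ∀ q ∈ e.toWord.head?, NC p q

def jr (W : List (α × Bool)) : ℕ → List (α × Bool)
  | 0 => []
  | k + 1 => W ++ jr W k

theorem jr_length (W : List (α × Bool)) (k : ℕ) : (jr W k).length = k * W.length := by
  induction k with
  | zero => simp [jr]
  | succ k ih => simp [jr, ih]; ring

theorem jr_head (W : List (α × Bool)) (k : ℕ) :
    (jr W k).head? = W.head? ∨ jr W k = [] := by
  cases k with
  | zero => exact Or.inr rfl
  | succ k =>
    cases W with
    | nil =>
      right
      show List.nil ++ jr [] k = []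
      rw [List.nil_append]
      induction k with
      | zero => rfl
      | succ k ih => show List.nil ++ jr [] k = []; rw [List.nil_append]; exact ih
    | cons x t => left; rfl

theorem jr_isRed {e : FreeGroup α} (he : CycRed e) (k : ℕ) : IsRed (jr e.toWord k) := by
  induction k with
  | zero => exact List.isChain_nil
  | succ k ih =>
    refine (isRed_toWord e).append ih ?_
    intro p hp q hq
    rcases jr_head e.toWord k with h | h
    · exact he p hp q (h ▸ hq)
    · rw [h] at hq; simp at hq

theorem jr_mk (e : FreeGroup α) (k : ℕ) : mk (jr e.toWord k) = e ^ k := by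
  induction k with
  | zero => rfl
  | succ k ih =>
    show mk (e.toWord ++ jr e.toWord k) = e ^ (k+1)
    rw [← mul_mk, ih, mk_toWord, ← pow_succ']

theorem norm_pow_of_cycRed {e : FreeGroup α} (he : CycRed e) (k : ℕ) :
    norm (e ^ k) = k * norm e := by
  have h1 : (e ^ k).toWord = jr e.toWord k := by
    rw [← jr_mk e k, toWord_eq_of_isRed (jr_isRed he k)]
  show (e ^ k).toWord.length = k * e.toWord.length
  rw [h1, jr_length]

theorem norm_zpow_of_cycRed {e : FreeGroup α} (he : CycRed e) (n : ℤ) :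
    norm (e ^ n) = n.natAbs * norm e := by
  rcases Int.natAbs_eq n with h | h
  · conv_lhs => rw [h]
    rw [zpow_natCast, norm_pow_of_cycRed he]
  · conv_lhs => rw [h]
    rw [zpow_neg, zpow_natCast, norm_inv_eq, norm_pow_of_cycRed he]

/-- Cyclic reduction: every nontrivial element is a conjugate of a nontrivial
cyclically reduced element. -/
theorem exists_cycRed (c : FreeGroup α) (hc : c ≠ 1) :
    ∃ r e : FreeGroup α, c = r * e * r⁻¹ ∧ e ≠ 1 ∧ CycRed e := by
  generalize hn : norm c = n
  induction n using Nat.strong_induction_on generalizing c with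
  | _ n ih =>
  by_cases hcr : CycRed c
  · exact ⟨1, c, by simp, hc, hcr⟩
  · -- extract the cancelling pair
    simp only [CycRed, not_forall] at hcr
    obtain ⟨p, hp, q, hq, hnc⟩ := hcr
    simp only [NC, not_not] at hnc
    -- toWord c = q :: M ++ [p]
    have hL : c.toWord ≠ [] := by
      intro h; exact hc (toWord_eq_nil_iff.mp h)
    obtain ⟨q', M', hW⟩ : ∃ q' M', c.toWord = q' :: M' := by
      cases h : c.toWord with
      | nil => exact absurd h hL
      | cons a l => exact ⟨a, l, rfl⟩
    have hqq : q = q' := by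
      rw [hW] at hq; simp at hq; exact hq.symm
    subst hqq
    have hM'ne : M' ≠ [] := by
      rintro rfl
      rw [hW] at hp
      simp at hp
      rcases hnc with ⟨-, h2⟩
      rw [← hp] at h2
      simp at h2
    obtain ⟨M, p', hM'⟩ : ∃ M p', M' = M ++ [p'] := by
      rcases List.eq_nil_or_concat M' with h | ⟨M, p', h⟩
      · exact absurd h hM'ne
      · exact ⟨M, p', by simpa using h⟩
    have hpp : p = p' := by
      rw [hW, hM'] at hp
      have : (q :: (M ++ [p'])).getLast? = some p' := by
        rw [List.getLast?_eq_getLast (l := q :: (M ++ [p'])) (by simp), List.getLast_cons (by simp)]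
        simp
      rw [this] at hp
      simp at hp
      exact hp.symm
    subst hpp
    -- now c = mk [q] * mk M * mk [p]
    have hceq : c = mk [q] * mk M * mk [p] := by
      rw [mul_mk, mul_mk]
      have : q :: M' = [q] ++ M ++ [p] := by rw [hM']; simp
      rw [← this, ← hW, mk_toWord]
    have hpq : p = (q.1, !q.2) := by
      rcases hnc with ⟨h1, h2⟩
      cases p; cases q
      simp_all
    have hinv : mk [p] = (mk [q])⁻¹ := by
      rw [inv_mk]
      rw [hpq]
      simp [invRev]
    have hnorm : norm (mk M) < n := by
      have h1 : norm (mk M) ≤ M.length := norm_mk_le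
      have h2 : c.toWord.length = M.length + 2 := by
        rw [hW, hM']; simp
      have : c.toWord.length = n := hn
      omega
    have hMne : mk M ≠ 1 := by
      intro h
      apply hc
      rw [hceq, h, hinv]
      group
    obtain ⟨r, e, h1, h2, h3⟩ := ih (norm (mk M)) hnorm (mk M) hMne rfl
    refine ⟨mk [q] * r, e, ?_, h2, h3⟩
    rw [hceq, hinv, h1]
    group

theorem conj_zpow_cases {c x : FreeGroup α} (hc : c ≠ 1) {n m : ℤ} (hn : n ≠ 0)
    (h : x * c ^ n * x⁻¹ = c ^ m) : m = n ∨ m = -n := by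
  obtain ⟨r, e, hre, he1, hecr⟩ := exists_cycRed c hc
  have hE1 : 1 ≤ norm e := by
    rcases Nat.eq_zero_or_pos (norm e) with h0 | h1
    · exact absurd (norm_eq_zero.mp h0) he1
    · exact h1
  have hczpow : ∀ j : ℤ, c ^ j = r * e ^ j * r⁻¹ := by
    intro j
    rw [hre]
    rw [show r * e * r⁻¹ = (MulAut.conj r) e from rfl, ← map_zpow]
    rfl
  have hub : ∀ j : ℤ, norm (c ^ j) ≤ j.natAbs * norm e + 2 * norm r := by
    intro j
    rw [hczpow j]
    calc norm (r * e ^ j * r⁻¹) ≤ norm (r * e ^ j) + norm r⁻¹ := norm_mul_le _ _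
    _ ≤ norm r + norm (e ^ j) + norm r⁻¹ := by
        have := norm_mul_le r (e ^ j); omega
    _ = j.natAbs * norm e + 2 * norm r := by
        rw [norm_inv_eq, norm_zpow_of_cycRed hecr]; omega
  have hlb : ∀ j : ℤ, j.natAbs * norm e ≤ norm (c ^ j) + 2 * norm r := by
    intro j
    have hej : e ^ j = r⁻¹ * c ^ j * r := by rw [hczpow j]; group
    have h1 : norm (e ^ j) ≤ norm (c ^ j) + 2 * norm r := by
      rw [hej]
      calc norm (r⁻¹ * c ^ j * r) ≤ norm (r⁻¹ * c ^ j) + norm r := norm_mul_le _ _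
      _ ≤ norm r⁻¹ + norm (c ^ j) + norm r := by
          have := norm_mul_le r⁻¹ (c ^ j); omega
      _ = norm (c ^ j) + 2 * norm r := by rw [norm_inv_eq]; omega
    rw [norm_zpow_of_cycRed hecr] at h1
    exact h1
  -- main inequality step
  have step : ∀ (y : FreeGroup α) (N M : ℤ), y * c ^ N * y⁻¹ = c ^ M →
      M.natAbs ≤ N.natAbs := by
    intro y N M hy
    by_contra hgt
    push_neg at hgt
    set C := 4 * norm r + 2 * norm y with hC
    have key : ∀ k : ℕ, M.natAbs * k * norm e ≤ N.natAbs * k * norm e + C := by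
      intro k
      have hconj : y * c ^ (N * k) * y⁻¹ = c ^ (M * k) := by
        rw [zpow_mul, zpow_mul, ← hy]
        rw [show y * c ^ N * y⁻¹ = (MulAut.conj y) (c ^ N) from rfl, ← map_zpow]
        rfl
      have h1 : (M * k).natAbs * norm e ≤ norm (c ^ (M * (k:ℤ))) + 2 * norm r := hlb _
      have h2 : norm (c ^ (M * (k:ℤ))) ≤ 2 * norm y + norm (c ^ (N * (k:ℤ))) := by
        rw [← hconj]
        calc norm (y * c ^ (N * (k:ℤ)) * y⁻¹) ≤ norm (y * c ^ (N * (k:ℤ))) + norm y⁻¹ :=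
            norm_mul_le _ _
        _ ≤ norm y + norm (c ^ (N * (k:ℤ))) + norm y⁻¹ := by
            have := norm_mul_le y (c ^ (N * (k:ℤ))); omega
        _ = 2 * norm y + norm (c ^ (N * (k:ℤ))) := by rw [norm_inv_eq]; omega
      have h3 : norm (c ^ (N * (k:ℤ))) ≤ (N * k).natAbs * norm e + 2 * norm r := hub _
      have h4 : (M * (k:ℤ)).natAbs = M.natAbs * k := by
        rw [Int.natAbs_mul]; simp
      have h5 : (N * (k:ℤ)).natAbs = N.natAbs * k := by
        rw [Int.natAbs_mul]; simp
      rw [h4] at h1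
      rw [h5] at h3
      omega
    have := key (C + 1)
    have hMk : (N.natAbs + 1) * (C + 1) * norm e ≤ M.natAbs * (C + 1) * norm e := by
      have : N.natAbs + 1 ≤ M.natAbs := hgt
      exact Nat.mul_le_mul_right _ (Nat.mul_le_mul_right _ this)
    nlinarith [key (C + 1), hMk, hE1]
  have h1 : m.natAbs ≤ n.natAbs := step x n m h
  have h2 : n.natAbs ≤ m.natAbs := by
    refine step x⁻¹ m n ?_
    rw [← h]; group
  have : m.natAbs = n.natAbs := le_antisymm h1 h2
  exact Int.natAbs_eq_natAbs_iff.mp this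


end Words

theorem not_commute_of_ne {ι : Type} {i j : ι} (hij : i ≠ j) :
    ¬ Commute (FreeGroup.of i) (FreeGroup.of j) := by
  classical
  intro h
  let f : ι → Equiv.Perm (Fin 3) := fun k =>
    if k = i then Equiv.swap 0 1 else if k = j then Equiv.swap 1 2 else 1
  have h2 := congrArg (FreeGroup.lift f) h
  simp only [_root_.map_mul, FreeGroup.lift_apply_of] at h2
  have hfi : f i = Equiv.swap 0 1 := by simp [f]
  have hfj : f j = Equiv.swap 1 2 := by simp [f, hij.symm]
  rw [hfi, hfj] at h2
  have h3 := DFunLike.congr_fun h2 0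
  simp [Equiv.swap_apply_def] at h3

theorem subsingleton_free {ι : Type} [Subsingleton ι] :
    ∃ c : FreeGroup ι, ∀ w : FreeGroup ι, ∃ k : ℤ, w = c ^ k := by
  rcases isEmpty_or_nonempty ι with hE | hN
  · refine ⟨1, fun w => ⟨0, ?_⟩⟩
    have h1 : Subgroup.closure (Set.range (FreeGroup.of : ι → FreeGroup ι)) = ⊤ :=
      FreeGroup.closure_range_of ι
    have hrange : Set.range (FreeGroup.of : ι → FreeGroup ι) = ∅ := by
      exact Set.range_eq_empty _
    rw [hrange, Subgroup.closure_empty] at h1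
    have hw : w ∈ (⊥ : Subgroup (FreeGroup ι)) := h1 ▸ Subgroup.mem_top w
    simpa using hw
  · obtain ⟨i₀⟩ := hN
    refine ⟨FreeGroup.of i₀, fun w => ?_⟩
    have hle : Subgroup.closure (Set.range (FreeGroup.of : ι → FreeGroup ι)) ≤
        Subgroup.zpowers (FreeGroup.of i₀) := by
      rw [Subgroup.closure_le]
      rintro x ⟨i, rfl⟩
      have : i = i₀ := Subsingleton.elim _ _
      subst this
      exact ⟨1, by simp⟩
    rw [FreeGroup.closure_range_of] at hle
    obtain ⟨k, hk⟩ := hle (Subgroup.mem_top w)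
    exact ⟨k, hk.symm⟩

theorem commute_exists_common {α : Type} {x y : FreeGroup α} (h : Commute x y) :
    ∃ c : FreeGroup α, (∃ i : ℤ, x = c ^ i) ∧ (∃ j : ℤ, y = c ^ j) := by
  set K : Subgroup (FreeGroup α) := Subgroup.closure {x, y} with hK
  have hxK : x ∈ K := Subgroup.subset_closure (by simp)
  have hyK : y ∈ K := Subgroup.subset_closure (by simp)
  have hcomm : ∀ g ∈ K, ∀ h' ∈ K, Commute g h' := by
    have base : ∀ g ∈ ({x, y} : Set (FreeGroup α)), ∀ h' ∈ ({x, y} : Set (FreeGroup α)),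
        Commute g h' := by
      rintro g (rfl | rfl) h' (rfl | rfl)
      · exact Commute.refl _
      · exact h
      · exact h.symm
      · exact Commute.refl _
    intro g hg
    induction hg using Subgroup.closure_induction with
    | mem z hz =>
      intro h' hh'
      induction hh' using Subgroup.closure_induction with
      | mem z' hz' => exact base z hz z' hz'
      | one => exact Commute.one_right _
      | mul _ _ _ _ ih1 ih2 => exact ih1.mul_right ih2
      | inv _ _ ih => exact ih.inv_right
    | one => intro h' _; exact Commute.one_left _
    | mul _ _ _ _ ih1 ih2 => intro h' hh'; exact (ih1 h' hh').mul_left (ih2 h' hh')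
    | inv _ _ ih => intro h' hh'; exact (ih h' hh').inv_left
  haveI : IsFreeGroup K := inferInstance
  obtain ⟨ι, ⟨b⟩⟩ := IsFreeGroup.nonempty_basis (G := K)
  haveI : Subsingleton ι := by
    by_contra hns
    obtain ⟨i, j, hij⟩ := not_subsingleton_iff_nontrivial.mp hns |>.exists_pair_ne
    have hcom : Commute (b i) (b j) :=
      Subtype.ext (by simpa using (hcomm _ (b i).2 _ (b j).2).eq)
    have hcom2 : Commute (FreeGroup.of i) (FreeGroup.of j) := by
      have := congrArg b.repr hcom
      simp only [_root_.map_mul, FreeGroupBasis.repr_apply_coe] at this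
      exact this
    exact not_commute_of_ne hij hcom2
  obtain ⟨c', hc'⟩ := subsingleton_free (ι := ι)
  refine ⟨((b.repr.symm c' : K) : FreeGroup α), ?_, ?_⟩
  · obtain ⟨i, hi⟩ := hc' (b.repr ⟨x, hxK⟩)
    refine ⟨i, ?_⟩
    have : (⟨x, hxK⟩ : K) = b.repr.symm c' ^ i := by
      apply b.repr.injective
      rw [hi, map_zpow]
      simp
    calc x = ((⟨x, hxK⟩ : K) : FreeGroup α) := rfl
    _ = ((b.repr.symm c' ^ i : K) : FreeGroup α) := by rw [this]
    _ = ((b.repr.symm c' : K) : FreeGroup α) ^ i := by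
        rw [SubgroupClass.coe_zpow]
  · obtain ⟨j, hj⟩ := hc' (b.repr ⟨y, hyK⟩)
    refine ⟨j, ?_⟩
    have : (⟨y, hyK⟩ : K) = b.repr.symm c' ^ j := by
      apply b.repr.injective
      rw [hj, map_zpow]
      simp
    calc y = ((⟨y, hyK⟩ : K) : FreeGroup α) := rfl
    _ = ((b.repr.symm c' ^ j : K) : FreeGroup α) := by rw [this]
    _ = ((b.repr.symm c' : K) : FreeGroup α) ^ j := by
        rw [SubgroupClass.coe_zpow]


abbrev F2 := FreeGroup (Fin 2)

/-- exponent sum homomorphism -/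
def expSum (i : Fin 2) : F2 →* Multiplicative ℤ :=
  FreeGroup.lift (fun j => Multiplicative.ofAdd (if j = i then (1:ℤ) else 0))

def ES (i : Fin 2) (w : F2) : ℤ := Multiplicative.toAdd (expSum i w)

theorem ES_zpow (i : Fin 2) (c : F2) (k : ℤ) : ES i (c ^ k) = k * ES i c := by
  simp [ES, map_zpow, expSum]

theorem ES_conj (i : Fin 2) (x u : F2) : ES i (x * u * x⁻¹) = ES i u := by
  simp only [ES, _root_.map_mul, _root_.map_inv, toAdd_mul, toAdd_inv]
  ring

theorem ES_of (i j : Fin 2) : ES i (FreeGroup.of j) = if j = i then 1 else 0 := by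
  simp [ES, expSum]

theorem ES_sq (i : Fin 2) (x : F2) : ES i (x ^ 2) = 2 * ES i x := by
  rw [sq]
  simp only [ES, _root_.map_mul, toAdd_mul]
  ring

theorem stepA {u t : F2} (hu : u ≠ 1) (h : Commute u (t * u * t⁻¹)) :
    Commute u t ∨ Commute u (t ^ 2) := by
  obtain ⟨c, ⟨i, hx⟩, ⟨j, hy⟩⟩ := commute_exists_common h
  have hc : c ≠ 1 := by rintro rfl; simp at hx; exact hu hx
  have hi : i ≠ 0 := by rintro rfl; simp at hx; exact hu hx
  have hconj : t * c ^ i * t⁻¹ = c ^ j := by rw [← hx, ← hy]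
  rcases conj_zpow_cases hc hi hconj with hji | hji
  · left
    have : t * u * t⁻¹ = u := by rw [hy, hji, ← hx]
    have h2 : t * u = u * t := by
      have := congrArg (· * t) this
      simpa [mul_assoc] using this
    exact (Commute.symm h2)
  · right
    have h1 : t * u * t⁻¹ = u⁻¹ := by
      rw [hy, hji, zpow_neg, ← hx]
    have h2 : t ^ 2 * u * (t ^ 2)⁻¹ = u := by
      have : t * (t * u * t⁻¹) * t⁻¹ = t * u⁻¹ * t⁻¹ := by rw [h1]
      rw [show t * (t * u * t⁻¹) * t⁻¹ = t^2 * u * (t^2)⁻¹ by simp [sq, mul_assoc]] at this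
      rw [this]
      have := congrArg (·⁻¹) h1
      simp only [mul_inv_rev, inv_inv] at this
      calc t * u⁻¹ * t⁻¹ = (t * u * t⁻¹)⁻¹ := by group
      _ = (u⁻¹)⁻¹ := by rw [h1]
      _ = u := inv_inv u
    have h3 : t ^ 2 * u = u * t ^ 2 := by
      have := congrArg (· * t ^ 2) h2
      simpa [mul_assoc] using this
    exact (Commute.symm h3)

theorem fg1 {u : F2} (hu : u ≠ 1)
    (h1 : Commute u (FreeGroup.of 0 * u * (FreeGroup.of 0)⁻¹))
    (h2 : Commute u (FreeGroup.of 1 * u * (FreeGroup.of 1)⁻¹)) : False := by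
  obtain ⟨p, hcp, hp0, hp1⟩ : ∃ p : F2, Commute u p ∧ ES 0 p ≠ 0 ∧ ES 1 p = 0 := by
    rcases stepA hu h1 with h | h
    · exact ⟨_, h, by rw [ES_of]; simp, by rw [ES_of]; simp⟩
    · exact ⟨_, h, by rw [ES_sq, ES_of]; simp, by rw [ES_sq, ES_of]; simp⟩
  obtain ⟨q, hcq, hq1, hq0⟩ : ∃ q : F2, Commute u q ∧ ES 1 q ≠ 0 ∧ ES 0 q = 0 := by
    rcases stepA hu h2 with h | h
    · exact ⟨_, h, by rw [ES_of]; simp, by rw [ES_of]; simp⟩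
    · exact ⟨_, h, by rw [ES_sq, ES_of]; simp, by rw [ES_sq, ES_of]; simp⟩
  obtain ⟨c, ⟨i, hui⟩, ⟨j, hpj⟩⟩ := commute_exists_common hcp
  obtain ⟨d, ⟨i', hui'⟩, ⟨j', hqj⟩⟩ := commute_exists_common hcq
  -- p = c ^ j with ES 0 p ≠ 0 hence j ≠ 0 and ES 0 c ≠ 0; ES 1 c = 0
  have hj : j ≠ 0 := by rintro rfl; rw [hpj, ES_zpow] at hp0; simp at hp0
  have hc0 : ES 0 c ≠ 0 := by
    intro h
    rw [hpj, ES_zpow, h, mul_zero] at hp0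
    exact hp0 rfl
  have hc1 : ES 1 c = 0 := by
    have := hp1
    rw [hpj, ES_zpow] at this
    rcases mul_eq_zero.mp this with h | h
    · exact absurd h hj
    · exact h
  have hj' : j' ≠ 0 := by rintro rfl; rw [hqj, ES_zpow] at hq1; simp at hq1
  have hd0 : ES 0 d = 0 := by
    have := hq0
    rw [hqj, ES_zpow] at this
    rcases mul_eq_zero.mp this with h | h
    · exact absurd h hj'
    · exact h
  -- ES 0 u = i' * ES 0 d = 0; but ES 0 u = i * ES 0 c with ES 0 c ≠ 0 so i = 0, u = 1
  have hu0 : ES 0 u = 0 := by rw [hui', ES_zpow, hd0, mul_zero]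
  have : i * ES 0 c = 0 := by rw [← ES_zpow, ← hui, hu0]
  rcases mul_eq_zero.mp this with h | h
  · rw [h] at hui; simp at hui; exact hu hui
  · exact hc0 h


theorem norm_comm_le (v t : F2) (ht : norm t = 1) :
    norm ⁅v, t * v * t⁻¹⁆ ≤ 4 * norm v + 4 := by
  rw [commutatorElement_def]
  have k1 : norm (t * v * t⁻¹) ≤ norm v + 2 := by
    have a1 := norm_mul_le (t * v) t⁻¹
    have a2 := norm_mul_le t v
    rw [norm_inv_eq, ht] at a1
    omega
  have k2 : norm ((t * v * t⁻¹)⁻¹) ≤ norm v + 2 := by rw [norm_inv_eq]; exact k1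
  have a3 := norm_mul_le (v * (t * v * t⁻¹) * v⁻¹) (t * v * t⁻¹)⁻¹
  have a4 := norm_mul_le (v * (t * v * t⁻¹)) v⁻¹
  have a5 := norm_mul_le v (t * v * t⁻¹)
  rw [norm_inv_eq] at a4
  omega


end Statement19Aux

open Statement19Aux FreeGroup in
/-- Let `G` be a nonsolvable Lie group (here: a topological group that is
not solvable), `H ⊆ G` its maximal connected normal solvable subgroup, and let `s` be the
length of the derived series of `H` (so `H⁽ˢ⁾ = 1` and `H⁽ˢ⁻¹⁾ ≠ 1`). Then for any
nontrivial word `w` in two symbols and any `Ã, B̃ ∈ G` with `w(Ã,B̃) ∈ H`, there is a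
nontrivial word `w̃` with `|w̃| ≤ 4^(s+1) * |w|` and `w̃(Ã,B̃) = 1`. -/
theorem statement19 {G : Type*} [Group G] [TopologicalSpace G] [IsTopologicalGroup G]
    (hG : ¬ IsSolvable G)
    (H : Subgroup G) (hnormal : H.Normal) (hconn : IsConnected (H : Set G))
    (hsolv : IsSolvable ↥H)
    (hmax : ∀ K : Subgroup G, K.Normal → IsConnected (K : Set G) → IsSolvable ↥K → K ≤ H)
    (s : ℕ) (hs : derivedSeries ↥H s = ⊥) (hs' : 1 ≤ s → derivedSeries ↥H (s - 1) ≠ ⊥)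
    (w : FreeGroup (Fin 2)) (hw : w ≠ 1) (A B : G) (hmem : wordEval A B w ∈ H) :
    ∃ w' : FreeGroup (Fin 2), w' ≠ 1 ∧ wordLength w' ≤ 4 ^ (s + 1) * wordLength w ∧
      wordEval A B w' = 1 := by
  classical
  -- the evaluation homomorphism
  set φ : FreeGroup (Fin 2) →* G := FreeGroup.lift ![A, B] with hφ
  have hφeval : ∀ v : FreeGroup (Fin 2), wordEval A B v = φ v := fun _ => rfl
  -- the derived series of H inside G
  set N : ℕ → Subgroup G := fun i => Nat.rec H (fun _ Ni => ⁅Ni, Ni⁆) i with hN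
  have hN0 : N 0 = H := rfl
  have hNsucc : ∀ i, N (i + 1) = ⁅N i, N i⁆ := fun _ => rfl
  have hNnormal : ∀ i, (N i).Normal := by
    intro i
    induction i with
    | zero => exact hnormal
    | succ i ih => exact @Subgroup.commutator_normal G _ (N i) (N i) ih ih
  have hNder : ∀ i, N i = (derivedSeries ↥H i).map H.subtype := by
    intro i
    induction i with
    | zero =>
      have hmt : Subgroup.map H.subtype ⊤ = H := by
        rw [← MonoidHom.range_eq_map, Subgroup.range_subtype]
      rw [hN0, derivedSeries_zero]
      exact hmt.symm
    | succ i ih =>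
      rw [hNsucc, ih, derivedSeries_succ, Subgroup.map_commutator]
  have hNs : N s = ⊥ := by rw [hNder, hs, Subgroup.map_bot]
  -- norm of w is positive
  have hwpos : 1 ≤ norm w := by
    rcases Nat.eq_zero_or_pos (norm w) with h0 | h1
    · exact absurd (FreeGroup.norm_eq_zero.mp h0) hw
    · exact h1
  -- the main induction
  have main : ∀ i : ℕ, ∃ v : FreeGroup (Fin 2), v ≠ 1 ∧
      norm v + 2 ≤ 4 ^ i * (norm w + 2) ∧ φ v ∈ N i := by
    intro i
    induction i with
    | zero => exact ⟨w, hw, by simp, hmem⟩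
    | succ i ih =>
      obtain ⟨v, hv1, hv2, hv3⟩ := ih
      -- choose the generator that keeps the commutator nontrivial
      have hchoice : ∃ t : FreeGroup (Fin 2), norm t = 1 ∧ ⁅v, t * v * t⁻¹⁆ ≠ 1 := by
        by_contra hcon
        push_neg at hcon
        have c0 := hcon (FreeGroup.of 0) (FreeGroup.norm_of 0)
        have c1 := hcon (FreeGroup.of 1) (FreeGroup.norm_of 1)
        exact fg1 hv1 (commutatorElement_eq_one_iff_commute.mp c0)
          (commutatorElement_eq_one_iff_commute.mp c1)
      obtain ⟨t, ht1, ht2⟩ := hchoice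
      refine ⟨⁅v, t * v * t⁻¹⁆, ht2, ?_, ?_⟩
      · have hb := norm_comm_le v t ht1
        have : (4:ℕ) ^ (i+1) * (norm w + 2) = 4 * (4 ^ i * (norm w + 2)) := by ring
        omega
      · rw [hNsucc]
        have h1 : φ v ∈ N i := hv3
        have h2 : φ (t * v * t⁻¹) ∈ N i := by
          rw [_root_.map_mul, _root_.map_mul, _root_.map_inv]
          exact (hNnormal i).conj_mem _ h1 (φ t)
        rw [map_commutatorElement]
        exact Subgroup.commutator_mem_commutator h1 h2
  obtain ⟨v, hv1, hv2, hv3⟩ := main s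
  refine ⟨v, hv1, ?_, ?_⟩
  · -- length bound
    have hwl : wordLength w = norm w := rfl
    have hvl : wordLength v = norm v := rfl
    rw [hwl, hvl]
    have h1 : norm w + 2 ≤ 3 * norm w := by omega
    calc norm v ≤ 4 ^ s * (norm w + 2) := by omega
    _ ≤ 4 ^ s * (3 * norm w) := Nat.mul_le_mul_left _ h1
    _ ≤ 4 ^ (s + 1) * norm w := by rw [pow_succ]; ring_nf; omega
  · rw [hφeval, ← Subgroup.mem_bot, ← hNs]
    exact hv3
end
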